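/- For every integer N ≥ 2, the cardinalities a_k = #(𝒫_k) satisfy the Catalan-type recurrence a_N = Σ_{j=2}^{N} a_{j−1} · a_{N−j+1}. -/

import Mathlib

/-- A parent function on `[N] = {1, …, N}`, modeled 0-indexed on `Fin N`
(index `i : Fin N` corresponds to the book `i + 1`): `P(i) > i` for all
`1 ≤ i ≤ N - 1` and `P(N) = N`. -/
def IsParentFn (N : ℕ) (P : Fin N → Fin N) : Prop :=
  (∀ i : Fin N, (i : ℕ) + 1 < N → i < P i) ∧
  (∀ i : Fin N, (i : ℕ) + 1 = N → P i = i)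

/-- Condition (P3): for every pair `1 ≤ i < j ≤ N`, if `j < P(i)` then `P(j) ≤ P(i)`. -/
def CondP3 (N : ℕ) (P : Fin N → Fin N) : Prop :=
  ∀ i j : Fin N, i < j → j < P i → P j ≤ P i

/-- `a_N = #(𝒫_N)`, the number of parent functions on `[N]` satisfying (P3). -/
noncomputable def cardPF (N : ℕ) : ℕ :=
  Nat.card {P : Fin N → Fin N // IsParentFn N P ∧ CondP3 N P}

/-! ### Auxiliary material -/

abbrev PFt (n : ℕ) := {P : Fin n → Fin n // IsParentFn n P ∧ CondP3 n P}

lemma pf_ge {N : ℕ} {P : Fin N → Fin N} (hP : IsParentFn N P) (i : Fin N) :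
    (i : ℕ) ≤ (P i : ℕ) := by
  rcases Nat.lt_or_ge ((i : ℕ) + 1) N with h | h
  · exact le_of_lt (hP.1 i h)
  · have h' : (i : ℕ) + 1 = N := by have := i.isLt; omega
    rw [hP.2 i h']

/-- The "left part" of a decomposed parent function. -/
def mkQ (N j0 : ℕ) (P : Fin N → Fin N) (hj0 : 0 < j0) (hj0N : j0 < N) :
    Fin j0 → Fin j0 := fun t =>
  have h1 : (t : ℕ) + 1 < N := by have := t.isLt; omega
  ⟨min ((P ⟨(t : ℕ) + 1, h1⟩ : ℕ)) j0 - 1, by omega⟩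

/-- The "right part" of a decomposed parent function. -/
def mkR (N j0 : ℕ) (P : Fin N → Fin N) (hj0N : j0 < N) :
    Fin (N - j0) → Fin (N - j0) := fun s =>
  have h1 : (s : ℕ) + j0 < N := by have := s.isLt; omega
  ⟨(P ⟨(s : ℕ) + j0, h1⟩ : ℕ) - j0, by
    have := (P ⟨(s : ℕ) + j0, h1⟩).isLt; omega⟩

/-- Reassembling a parent function from its two parts. -/
def mkP (N j0 : ℕ) (hj0 : 0 < j0) (hj0N : j0 < N)
    (Q : Fin j0 → Fin j0) (R : Fin (N - j0) → Fin (N - j0)) : Fin N → Fin N := fun i =>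
  if h0 : (i : ℕ) = 0 then ⟨j0, hj0N⟩
  else if h1 : (i : ℕ) < j0 then
    have hq : (i : ℕ) - 1 < j0 := by omega
    ⟨(Q ⟨(i : ℕ) - 1, hq⟩ : ℕ) + 1, by have := (Q ⟨(i : ℕ) - 1, hq⟩).isLt; omega⟩
  else
    have hr : (i : ℕ) - j0 < N - j0 := by have := i.isLt; omega
    ⟨(R ⟨(i : ℕ) - j0, hr⟩ : ℕ) + j0, by have := (R ⟨(i : ℕ) - j0, hr⟩).isLt; omega⟩


lemma mkP_val_zero {N j0 : ℕ} (hj0 : 0 < j0) (hj0N : j0 < N)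
    (Q : Fin j0 → Fin j0) (R : Fin (N - j0) → Fin (N - j0)) {i : Fin N}
    (h : (i : ℕ) = 0) : (mkP N j0 hj0 hj0N Q R i : ℕ) = j0 := by
  simp only [mkP, dif_pos h]

lemma mkP_val_lt {N j0 : ℕ} (hj0 : 0 < j0) (hj0N : j0 < N)
    (Q : Fin j0 → Fin j0) (R : Fin (N - j0) → Fin (N - j0)) {i : Fin N}
    (h0 : (i : ℕ) ≠ 0) (h1 : (i : ℕ) < j0) (hq : (i : ℕ) - 1 < j0) :
    (mkP N j0 hj0 hj0N Q R i : ℕ) = (Q ⟨(i : ℕ) - 1, hq⟩ : ℕ) + 1 := by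
  simp only [mkP, dif_neg h0, dif_pos h1]

lemma mkP_val_ge {N j0 : ℕ} (hj0 : 0 < j0) (hj0N : j0 < N)
    (Q : Fin j0 → Fin j0) (R : Fin (N - j0) → Fin (N - j0)) {i : Fin N}
    (h1 : ¬ (i : ℕ) < j0) (hr : (i : ℕ) - j0 < N - j0) :
    (mkP N j0 hj0 hj0N Q R i : ℕ) = (R ⟨(i : ℕ) - j0, hr⟩ : ℕ) + j0 := by
  have h0 : (i : ℕ) ≠ 0 := by omega
  simp only [mkP, dif_neg h0, dif_neg h1]

section decomp

variable {N j0 : ℕ} {P : Fin N → Fin N} (hj0 : 0 < j0) (hj0N : j0 < N)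

lemma le_j0_of_lt {P : Fin N → Fin N} (hP : IsParentFn N P ∧ CondP3 N P)
    (h0 : (P ⟨0, by omega⟩ : ℕ) = j0)
    {i : Fin N} (hi1 : 1 ≤ (i : ℕ)) (hij : (i : ℕ) < j0) : (P i : ℕ) ≤ j0 := by
  have h := hP.2 ⟨0, by omega⟩ i (by simp [Fin.lt_def]; omega)
    (by simp only [Fin.lt_def, h0]; exact hij)
  simpa [Fin.le_def, h0] using h

lemma mkQ_mem (hP : IsParentFn N P ∧ CondP3 N P)
    (h0 : (P ⟨0, by omega⟩ : ℕ) = j0) :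
    IsParentFn j0 (mkQ N j0 P hj0 hj0N) ∧ CondP3 j0 (mkQ N j0 P hj0 hj0N) := by
  obtain ⟨⟨hlt, htop⟩, hP3⟩ := hP
  refine ⟨⟨?_, ?_⟩, ?_⟩
  · intro t ht
    have h1 : (t : ℕ) + 1 < N := by have := t.isLt; omega
    have h3 := hlt ⟨(t : ℕ) + 1, h1⟩ (by show (t : ℕ) + 1 + 1 < N; omega)
    simp only [Fin.lt_def] at h3 ⊢
    simp only [mkQ]
    omega
  · intro t ht
    have h1 : (t : ℕ) + 1 < N := by have := t.isLt; omega
    have h3 := pf_ge ⟨hlt, htop⟩ ⟨(t : ℕ) + 1, h1⟩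
    simp only at h3
    apply Fin.ext
    simp only [mkQ]
    omega
  · intro t s hts hst
    have ht1 : (t : ℕ) + 1 < N := by have := t.isLt; omega
    have hs1 : (s : ℕ) + 1 < N := by have := s.isLt; omega
    simp only [Fin.lt_def, mkQ] at hts hst
    have h4 : (s : ℕ) + 1 < (P ⟨(t : ℕ) + 1, ht1⟩ : ℕ) := by omega
    have h5 := hP3 ⟨(t : ℕ) + 1, ht1⟩ ⟨(s : ℕ) + 1, hs1⟩ (by apply Fin.mk_lt_mk.mpr; omega)
      (by simp only [Fin.lt_def]; exact h4)
    simp only [Fin.le_def] at h5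
    simp only [Fin.le_def, mkQ]
    omega

lemma mkR_mem (hP : IsParentFn N P ∧ CondP3 N P) :
    IsParentFn (N - j0) (mkR N j0 P hj0N) ∧ CondP3 (N - j0) (mkR N j0 P hj0N) := by
  obtain ⟨⟨hlt, htop⟩, hP3⟩ := hP
  refine ⟨⟨?_, ?_⟩, ?_⟩
  · intro s hs
    have h1 : (s : ℕ) + j0 < N := by have := s.isLt; omega
    have h3 := hlt ⟨(s : ℕ) + j0, h1⟩ (by show (s : ℕ) + j0 + 1 < N; omega)
    simp only [Fin.lt_def] at h3 ⊢
    simp only [mkR]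
    omega
  · intro s hs
    have h1 : (s : ℕ) + j0 < N := by have := s.isLt; omega
    have h3 := htop ⟨(s : ℕ) + j0, h1⟩ (by show (s : ℕ) + j0 + 1 = N; omega)
    have h3' : (P ⟨(s : ℕ) + j0, h1⟩ : ℕ) = (s : ℕ) + j0 := by rw [h3]
    apply Fin.ext
    simp only [mkR]
    omega
  · intro s u hsu hus
    have hs1 : (s : ℕ) + j0 < N := by have := s.isLt; omega
    have hu1 : (u : ℕ) + j0 < N := by have := u.isLt; omega
    simp only [Fin.lt_def, mkR] at hsu hus
    have h5 := hP3 ⟨(s : ℕ) + j0, hs1⟩ ⟨(u : ℕ) + j0, hu1⟩ (by apply Fin.mk_lt_mk.mpr; omega)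
      (by simp only [Fin.lt_def]; omega)
    simp only [Fin.le_def] at h5
    simp only [Fin.le_def, mkR]
    omega

lemma mkP_mem {Q : Fin j0 → Fin j0} {R : Fin (N - j0) → Fin (N - j0)}
    (hQ : IsParentFn j0 Q ∧ CondP3 j0 Q) (hR : IsParentFn (N - j0) R ∧ CondP3 (N - j0) R) :
    IsParentFn N (mkP N j0 hj0 hj0N Q R) ∧ CondP3 N (mkP N j0 hj0 hj0N Q R) := by
  obtain ⟨⟨hQlt, hQtop⟩, hQ3⟩ := hQ
  obtain ⟨⟨hRlt, hRtop⟩, hR3⟩ := hR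
  refine ⟨⟨?_, ?_⟩, ?_⟩
  · intro i hi
    rw [Fin.lt_def]
    rcases Nat.eq_zero_or_pos (i : ℕ) with h0 | h0
    · rw [mkP_val_zero hj0 hj0N Q R h0]; omega
    · rcases Nat.lt_or_ge (i : ℕ) j0 with h1 | h1
      · have hq : (i : ℕ) - 1 < j0 := by omega
        rw [mkP_val_lt hj0 hj0N Q R (by omega) h1 hq]
        have := hQlt ⟨(i : ℕ) - 1, hq⟩ (by show (i : ℕ) - 1 + 1 < j0; omega)
        rw [Fin.lt_def] at this
        simp only [Fin.val_mk] at this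
        omega
      · have hr : (i : ℕ) - j0 < N - j0 := by have := i.isLt; omega
        rw [mkP_val_ge hj0 hj0N Q R (by omega) hr]
        have := hRlt ⟨(i : ℕ) - j0, hr⟩ (by show (i : ℕ) - j0 + 1 < N - j0; omega)
        rw [Fin.lt_def] at this
        simp only [Fin.val_mk] at this
        omega
  · intro i hi
    apply Fin.ext
    have h1 : ¬ (i : ℕ) < j0 := by omega
    have hr : (i : ℕ) - j0 < N - j0 := by omega
    rw [mkP_val_ge hj0 hj0N Q R h1 hr]
    have := hRtop ⟨(i : ℕ) - j0, hr⟩ (by show (i : ℕ) - j0 + 1 = N - j0; omega)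
    have h2 : (R ⟨(i : ℕ) - j0, hr⟩ : ℕ) = (i : ℕ) - j0 := by rw [this]
    omega
  · intro i k hik hki
    rw [Fin.lt_def] at hik
    rw [Fin.le_def]
    rcases Nat.eq_zero_or_pos (i : ℕ) with h0 | h0
    · rw [Fin.lt_def] at hki
      rw [mkP_val_zero hj0 hj0N Q R h0] at hki ⊢
      have hk0 : (k : ℕ) ≠ 0 := by omega
      have hk1 : (k : ℕ) < j0 := hki
      have hkq : (k : ℕ) - 1 < j0 := by omega
      rw [mkP_val_lt hj0 hj0N Q R hk0 hk1 hkq]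
      have := (Q ⟨(k : ℕ) - 1, hkq⟩).isLt
      omega
    · rcases Nat.lt_or_ge (i : ℕ) j0 with h1 | h1
      · have hiq : (i : ℕ) - 1 < j0 := by omega
        rw [Fin.lt_def, mkP_val_lt hj0 hj0N Q R (by omega) h1 hiq] at hki
        have hQb := (Q ⟨(i : ℕ) - 1, hiq⟩).isLt
        have hk1 : (k : ℕ) < j0 := by omega
        have hkq : (k : ℕ) - 1 < j0 := by omega
        rw [mkP_val_lt hj0 hj0N Q R (by omega) h1 hiq,
          mkP_val_lt hj0 hj0N Q R (by omega) hk1 hkq]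
        have h5 := hQ3 ⟨(i : ℕ) - 1, hiq⟩ ⟨(k : ℕ) - 1, hkq⟩
          (by apply Fin.mk_lt_mk.mpr; omega)
          (by rw [Fin.lt_def]; simp only [Fin.val_mk]; omega)
        rw [Fin.le_def] at h5
        omega
      · have hir : (i : ℕ) - j0 < N - j0 := by have := i.isLt; omega
        have hkr : (k : ℕ) - j0 < N - j0 := by have := k.isLt; omega
        rw [Fin.lt_def, mkP_val_ge hj0 hj0N Q R (by omega) hir] at hki
        rw [mkP_val_ge hj0 hj0N Q R (by omega) hir,
          mkP_val_ge hj0 hj0N Q R (by omega) hkr]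
        have h5 := hR3 ⟨(i : ℕ) - j0, hir⟩ ⟨(k : ℕ) - j0, hkr⟩
          (by apply Fin.mk_lt_mk.mpr; omega)
          (by rw [Fin.lt_def]; simp only [Fin.val_mk]; omega)
        rw [Fin.le_def] at h5
        omega

lemma mkP_zero {Q : Fin j0 → Fin j0} {R : Fin (N - j0) → Fin (N - j0)} :
    (mkP N j0 hj0 hj0N Q R ⟨0, by omega⟩ : ℕ) = j0 := by
  simp [mkP]

lemma mkP_mkQ_mkR (hP : IsParentFn N P ∧ CondP3 N P)
    (h0 : (P ⟨0, by omega⟩ : ℕ) = j0) :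
    mkP N j0 hj0 hj0N (mkQ N j0 P hj0 hj0N) (mkR N j0 P hj0N) = P := by
  funext i
  apply Fin.ext
  rcases Nat.eq_zero_or_pos (i : ℕ) with hz | hz
  · rw [mkP_val_zero hj0 hj0N _ _ hz]
    have hieq : i = ⟨0, by omega⟩ := Fin.ext hz
    rw [hieq]
    omega
  · rcases Nat.lt_or_ge (i : ℕ) j0 with h1 | h1
    · have hq : (i : ℕ) - 1 < j0 := by omega
      rw [mkP_val_lt hj0 hj0N _ _ (by omega) h1 hq]
      simp only [mkQ]
      have hidx : (⟨(i : ℕ) - 1 + 1, by omega⟩ : Fin N) = i := Fin.ext (by simp; omega)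
      rw [hidx]
      have hle := le_j0_of_lt hj0 hj0N hP h0 (by omega) h1
      have hgt : (i : ℕ) < (P i : ℕ) := by
        have := hP.1.1 i (by have := i.isLt; omega)
        rw [Fin.lt_def] at this; exact this
      omega
    · have hr : (i : ℕ) - j0 < N - j0 := by have := i.isLt; omega
      rw [mkP_val_ge hj0 hj0N _ _ (by omega) hr]
      simp only [mkR]
      have hidx : (⟨(i : ℕ) - j0 + j0, by omega⟩ : Fin N) = i := Fin.ext (by simp; omega)
      rw [hidx]
      have hge := pf_ge hP.1 i
      omega

lemma mkQ_mkP {Q : Fin j0 → Fin j0} {R : Fin (N - j0) → Fin (N - j0)}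
    (hQ : IsParentFn j0 Q ∧ CondP3 j0 Q) (hR : IsParentFn (N - j0) R ∧ CondP3 (N - j0) R) :
    mkQ N j0 (mkP N j0 hj0 hj0N Q R) hj0 hj0N = Q := by
  funext t
  apply Fin.ext
  simp only [mkQ]
  rcases Nat.lt_or_ge ((t : ℕ) + 1) j0 with h1 | h1
  · have hq : (t : ℕ) + 1 - 1 < j0 := by omega
    rw [mkP_val_lt hj0 hj0N Q R (by simp) (by simpa using h1) (by simpa using hq)]
    have hidx : (⟨((⟨(t : ℕ) + 1, by omega⟩ : Fin N) : ℕ) - 1, by simpa using hq⟩ : Fin j0) = t :=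
      Fin.ext (by simp)
    rw [hidx]
    have := (Q t).isLt
    omega
  · have ht1 : (t : ℕ) + 1 = j0 := by have := t.isLt; omega
    have hr : ((⟨(t : ℕ) + 1, by omega⟩ : Fin N) : ℕ) - j0 < N - j0 := by
      simp only [Fin.val_mk]; omega
    rw [mkP_val_ge hj0 hj0N Q R (by simp only [Fin.val_mk]; omega) hr]
    have htop := hQ.1.2 t ht1
    have htop' : (Q t : ℕ) = (t : ℕ) := by rw [htop]
    omega

lemma mkR_mkP {Q : Fin j0 → Fin j0} {R : Fin (N - j0) → Fin (N - j0)}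
    (hQ : IsParentFn j0 Q ∧ CondP3 j0 Q) (hR : IsParentFn (N - j0) R ∧ CondP3 (N - j0) R) :
    mkR N j0 (mkP N j0 hj0 hj0N Q R) hj0N = R := by
  funext s
  apply Fin.ext
  simp only [mkR]
  have hr : ((⟨(s : ℕ) + j0, by have := s.isLt; omega⟩ : Fin N) : ℕ) - j0 < N - j0 := by
    simp only [Fin.val_mk]; have := s.isLt; omega
  rw [mkP_val_ge hj0 hj0N Q R (by simp only [Fin.val_mk]; have := s.isLt; omega) hr]
  have hidx : (⟨((⟨(s : ℕ) + j0, by have := s.isLt; omega⟩ : Fin N) : ℕ) - j0, hr⟩ :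
      Fin (N - j0)) = s := Fin.ext (by simp only [Fin.val_mk]; omega)
  rw [hidx]
  omega

end decomp

lemma fiber_card (N j : ℕ) (hj2 : 2 ≤ j) (hjN : j ≤ N) :
    Nat.card {P : PFt N // (P.1 ⟨0, by omega⟩ : ℕ) + 1 = j}
      = cardPF (j - 1) * cardPF (N - j + 1) := by
  have hj0 : 0 < j - 1 := by omega
  have hj0N : j - 1 < N := by omega
  have hm : N - j + 1 = N - (j - 1) := by omega
  rw [cardPF, cardPF, hm, ← Nat.card_prod]
  refine Nat.card_eq_of_bijective
    (fun x => (⟨mkQ N (j - 1) x.1.1 hj0 hj0N,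
        mkQ_mem hj0 hj0N x.1.2 (by
          have hx : (x.1.1 ⟨0, by omega⟩ : ℕ) + 1 = j := x.2
          omega)⟩,
      ⟨mkR N (j - 1) x.1.1 hj0N, mkR_mem hj0N x.1.2⟩)) ⟨?_, ?_⟩
  · rintro ⟨⟨P, hP⟩, hg⟩ ⟨⟨P', hP'⟩, hg'⟩ h
    have hq : mkQ N (j-1) P hj0 hj0N = mkQ N (j-1) P' hj0 hj0N :=
      congrArg Subtype.val (congrArg Prod.fst h)
    have hr : mkR N (j-1) P hj0N = mkR N (j-1) P' hj0N :=
      congrArg Subtype.val (congrArg Prod.snd h)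
    have hg2 : (P ⟨0, by omega⟩ : ℕ) + 1 = j := hg
    have hg2' : (P' ⟨0, by omega⟩ : ℕ) + 1 = j := hg'
    have e1 := mkP_mkQ_mkR hj0 hj0N hP (by omega : (P ⟨0, by omega⟩ : ℕ) = j - 1)
    have e2 := mkP_mkQ_mkR hj0 hj0N hP' (by omega : (P' ⟨0, by omega⟩ : ℕ) = j - 1)
    have : P = P' := by rw [← e1, ← e2, hq, hr]
    simp [this]
  · rintro ⟨⟨Q, hQ⟩, ⟨R, hR⟩⟩
    refine ⟨⟨⟨mkP N (j-1) hj0 hj0N Q R, mkP_mem hj0 hj0N hQ hR⟩, by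
      show (mkP N (j-1) hj0 hj0N Q R ⟨0, by omega⟩ : ℕ) + 1 = j
      have := mkP_zero (N := N) (j0 := j-1) hj0 hj0N (Q := Q) (R := R); omega⟩, ?_⟩
    simp only [Prod.mk.injEq, Subtype.mk.injEq]
    exact ⟨mkQ_mkP hj0 hj0N hQ hR, mkR_mkP hj0 hj0N hQ hR⟩

/-- The Catalan-type recurrence `a_N = ∑_{j=2}^{N} a_{j-1} * a_{N-j+1}` for `N ≥ 2`. -/
theorem cardPF_recurrence (N : ℕ) (hN : 2 ≤ N) :
    cardPF N = ∑ j ∈ Finset.Icc 2 N, cardPF (j - 1) * cardPF (N - j + 1) := by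
  classical
  have : Finite (PFt N) := by infer_instance
  have inst : Fintype (PFt N) := Fintype.ofFinite _
  have h0 : (0 : ℕ) < N := by omega
  set g : PFt N → ℕ := fun P => (P.1 ⟨0, h0⟩ : ℕ) + 1 with hg
  have hmem : ∀ P : PFt N, P ∈ (Finset.univ : Finset (PFt N)) → g P ∈ Finset.Icc 2 N := by
    intro P _
    have h1 : (⟨0, h0⟩ : Fin N) < P.1 ⟨0, h0⟩ := P.2.1.1 ⟨0, h0⟩ (by show 0 + 1 < N; omega)
    have h2 := (P.1 ⟨0, h0⟩).isLt
    simp only [Fin.lt_def] at h1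
    simp only [Finset.mem_Icc, hg]
    omega
  have key := Finset.card_eq_sum_card_fiberwise hmem
  have hcard : cardPF N = (Finset.univ : Finset (PFt N)).card := by
    rw [cardPF, Nat.card_eq_fintype_card, Finset.card_univ]
  rw [hcard, key]
  refine Finset.sum_congr rfl ?_
  intro j hj
  simp only [Finset.mem_Icc] at hj
  rw [← fiber_card N j hj.1 hj.2]
  rw [Nat.card_eq_fintype_card, Fintype.card_subtype]
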